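/- Lower bound on the backtracking-Armijo stepsize: let f : ℝ^n → ℝ be differentiable with ∇f Lipschitz continuous with constant L > 0, let v, s ∈ ℝ^n with sᵀ∇f(v) < 0, let β, τ ∈ (0,1) and α₀ > 0. Suppose α > 0 satisfies the Armijo condition f(v + αs) ≤ f(v) + β·α·(sᵀ∇f(v)), and either α = α₀ or the Armijo condition fails at stepsize α/τ. Then α ≥ min{ α₀, 2τ(1−β)·(−sᵀ∇f(v)) / (L‖s‖²) }. -/

import Mathlib

open scoped RealInnerProductSpace


lemma descent_lemma {n : ℕ} (f : EuclideanSpace ℝ (Fin n) → ℝ)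
    (hf : Differentiable ℝ f) (L : ℝ)
    (hlip : ∀ v w, ‖gradient f v - gradient f w‖ ≤ L * ‖v - w‖)
    (v s : EuclideanSpace ℝ (Fin n)) (t : ℝ) (ht : 0 ≤ t) :
    f (v + t • s) ≤ f v + t * ⟪gradient f v, s⟫ + L * ‖s‖ ^ 2 * t ^ 2 / 2 := by
  set g : ℝ → ℝ := fun t => f v + t * ⟪gradient f v, s⟫ + L * ‖s‖ ^ 2 * t ^ 2 / 2 - f (v + t • s)
    with hg
  have hline : ∀ u : ℝ, HasDerivAt (fun u : ℝ => v + u • s) s u := by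
    intro u
    simpa using ((hasDerivAt_id u).smul_const s).const_add v
  have hcomp : ∀ u : ℝ, HasDerivAt (fun u : ℝ => f (v + u • s))
      ⟪gradient f (v + u • s), s⟫ u := by
    intro u
    have h1 : HasGradientAt f (gradient f (v + u • s)) (v + u • s) :=
      (hf (v + u • s)).hasGradientAt
    have h2 := (hasGradientAt_iff_hasFDerivAt.mp h1).comp_hasDerivAt u (hline u)
    simpa [Function.comp_def] using h2
  have hgd : ∀ u : ℝ, HasDerivAt g
      (⟪gradient f v, s⟫ + L * ‖s‖ ^ 2 * u - ⟪gradient f (v + u • s), s⟫) u := by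
    intro u
    have hq : HasDerivAt (fun u : ℝ => f v + u * ⟪gradient f v, s⟫ + L * ‖s‖ ^ 2 * u ^ 2 / 2)
        (⟪gradient f v, s⟫ + L * ‖s‖ ^ 2 * u) u := by
      have := (((hasDerivAt_id u).mul_const ⟪gradient f v, s⟫).const_add (f v)).add
        (((hasDerivAt_pow 2 u).const_mul (L * ‖s‖ ^ 2)).div_const 2)
      refine this.congr_deriv ?_
      norm_num
      ring
    exact hq.sub (hcomp u)
  have hmono : MonotoneOn g (Set.Ici (0 : ℝ)) := by
    apply monotoneOn_of_deriv_nonneg (convex_Ici 0)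
      (fun u _ => ((hgd u).continuousAt.continuousWithinAt))
      (fun u _ => ((hgd u).differentiableAt.differentiableWithinAt))
    intro u hu
    rw [interior_Ici] at hu
    rw [(hgd u).deriv]
    have key : ⟪gradient f v - gradient f (v + u • s), s⟫ ≥ -(L * ‖s‖ ^ 2 * u) := by
      have h1 := real_inner_le_norm (gradient f v - gradient f (v + u • s)) s
      have h2 := abs_real_inner_le_norm (gradient f v - gradient f (v + u • s)) s
      have h3 : ‖gradient f v - gradient f (v + u • s)‖ ≤ L * (u * ‖s‖) := by
        have := hlip v (v + u • s)
        simpa [norm_smul, abs_of_pos hu.out] using this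
      have h4 : |⟪gradient f v - gradient f (v + u • s), s⟫| ≤ L * (u * ‖s‖) * ‖s‖ :=
        h2.trans (by
          apply mul_le_mul_of_nonneg_right h3 (norm_nonneg s))
      nlinarith [abs_nonneg ⟪gradient f v - gradient f (v + u • s), s⟫,
        neg_abs_le ⟪gradient f v - gradient f (v + u • s), s⟫]
    have := key
    rw [inner_sub_left] at this
    linarith
  have h0 : g 0 = 0 := by simp [hg]
  have := hmono (Set.self_mem_Ici) (Set.mem_Ici.mpr ht) ht
  rw [h0] at this
  simp only [hg] at this
  linarith

/-- Lower bound on the backtracking-Armijo stepsize. -/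
theorem backtracking_armijo_stepsize_lower_bound
    {n : ℕ} (f : EuclideanSpace ℝ (Fin n) → ℝ)
    (hf : Differentiable ℝ f)
    (L : ℝ) (hL : 0 < L)
    (hlip : ∀ v w, ‖gradient f v - gradient f w‖ ≤ L * ‖v - w‖)
    (v s : EuclideanSpace ℝ (Fin n))
    (hdesc : ⟪s, gradient f v⟫ < 0)
    (β τ : ℝ) (hβ : β ∈ Set.Ioo (0 : ℝ) 1) (hτ : τ ∈ Set.Ioo (0 : ℝ) 1)
    (α₀ : ℝ) (hα₀ : 0 < α₀)
    (α : ℝ) (hαpos : 0 < α)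
    -- the Armijo condition holds at stepsize α
    (harmijo : f (v + α • s) ≤ f v + β * α * ⟪s, gradient f v⟫)
    -- and either α = α₀ or the Armijo condition fails at stepsize α/τ
    (hback : α = α₀ ∨
      ¬ (f (v + (α / τ) • s) ≤ f v + β * (α / τ) * ⟪s, gradient f v⟫)) :
    min α₀ (2 * τ * (1 - β) * (-⟪s, gradient f v⟫) / (L * ‖s‖ ^ 2)) ≤ α := by
  rcases hback with h | h
  · exact h ▸ min_le_left _ _
  · -- Armijo fails at α' = α / τ
    set g : ℝ := ⟪s, gradient f v⟫ with hgdef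
    have hs : s ≠ 0 := by
      intro hs0
      rw [hgdef, hs0] at hdesc
      simp at hdesc
    have hsnorm : 0 < ‖s‖ := norm_pos_iff.mpr hs
    have hα' : 0 < α / τ := div_pos hαpos hτ.1
    have hdl := descent_lemma f hf L hlip v s (α / τ) hα'.le
    rw [real_inner_comm] at hdl
    push_neg at h
    -- from failure and descent: β * (α/τ) * g < (α/τ) * g + L‖s‖²(α/τ)²/2
    have hkey : β * (α / τ) * g < (α / τ) * g + L * ‖s‖ ^ 2 * (α / τ) ^ 2 / 2 := by
      linarith
    have h2 : (1 - β) * (-g) < L * ‖s‖ ^ 2 * (α / τ) / 2 := by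
      have hτpos : 0 < τ := hτ.1
      have := (mul_lt_mul_iff_of_pos_right hα').mpr (show (0:ℝ) < 1 by norm_num)
      nlinarith [sq_nonneg (α / τ), hα']
    have hden : 0 < L * ‖s‖ ^ 2 := by positivity
    have h3 : 2 * τ * (1 - β) * (-g) / (L * ‖s‖ ^ 2) < α := by
      rw [div_lt_iff₀ hden]
      have : α / τ * τ = α := div_mul_cancel₀ α (ne_of_gt hτ.1)
      nlinarith [hτ.1]
    exact le_of_lt (lt_of_le_of_lt (min_le_right _ _) h3)
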